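/- For the RCD update on a complete graph, starting from any feasible x, the expected squared distance to the constrained minimizer contracts: E[‖x⁺ − x*‖²] ≤ (1 − hα/(n−1))·‖x − x*‖², where x⁺ = x − h Q^{ij} ∇f(x) with the edge (i,j) chosen uniformly at random among the n(n−1)/2 edges, for any step size 0 < h ≤ 1/β. -/

import Mathlib

open Matrix

lemma sum_ite_pair {n : ℕ} (i j : Fin n) (hij : i ≠ j) (a b : ℝ) :
    ∑ k, (if k = i then a else if k = j then b else 0) = a + b := by
  have hpt : ∀ k, (if k = i then a else if k = j then b else 0)
      = (if k = i then a else 0) + (if k = j then b else 0) := by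
    intro k
    by_cases h1 : k = i
    · subst h1; simp [hij]
    · by_cases h2 : k = j
      · subst h2; simp [h1, Ne.symm hij]
      · simp [h1, h2]
  simp_rw [hpt, Finset.sum_add_distrib, Finset.sum_ite_eq' Finset.univ,
    Finset.mem_univ, if_true]

lemma pair_sum {n : ℕ} (F : Fin n → Fin n → ℝ) (hd : ∀ i, F i i = 0)
    (hs : ∀ i j, F i j = F j i) :
    2 * ∑ p ∈ Finset.univ.filter (fun p : Fin n × Fin n => p.1 < p.2), F p.1 p.2
      = ∑ i, ∑ j, F i j := by
  classical
  have htot : ∑ i, ∑ j, F i j = ∑ p : Fin n × Fin n, F p.1 p.2 := by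
    rw [← Finset.univ_product_univ, Finset.sum_product]
  have hsplit := Finset.sum_filter_add_sum_filter_not Finset.univ
    (fun p : Fin n × Fin n => p.1 < p.2) (fun p => F p.1 p.2)
  have hnot : Finset.univ.filter (fun p : Fin n × Fin n => ¬ p.1 < p.2)
      = Finset.univ.filter (fun p : Fin n × Fin n => p.2 < p.1)
        ∪ Finset.univ.filter (fun p : Fin n × Fin n => p.1 = p.2) := by
    ext p
    simp only [Finset.mem_filter, Finset.mem_union, Finset.mem_univ, true_and]
    constructor
    · intro hp
      rcases lt_or_eq_of_le (le_of_not_gt hp) with h | h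
      · exact Or.inl h
      · exact Or.inr h.symm
    · rintro (h | h)
      · exact not_lt_of_gt h
      · exact h ▸ lt_irrefl _
  have hdisj : Disjoint (Finset.univ.filter (fun p : Fin n × Fin n => p.2 < p.1))
      (Finset.univ.filter (fun p : Fin n × Fin n => p.1 = p.2)) := by
    rw [Finset.disjoint_left]
    intro p hp hq
    simp only [Finset.mem_filter, Finset.mem_univ, true_and] at hp hq
    exact absurd (hq ▸ hp) (lt_irrefl _)
  have hdiag : ∑ p ∈ Finset.univ.filter (fun p : Fin n × Fin n => p.1 = p.2),
      F p.1 p.2 = 0 := by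
    apply Finset.sum_eq_zero
    intro p hp
    simp only [Finset.mem_filter] at hp
    rw [hp.2]; exact hd _
  have hswap : ∑ p ∈ Finset.univ.filter (fun p : Fin n × Fin n => p.2 < p.1), F p.1 p.2
      = ∑ p ∈ Finset.univ.filter (fun p : Fin n × Fin n => p.1 < p.2), F p.1 p.2 := by
    apply Finset.sum_nbij' (fun p => Prod.swap p) (fun p => Prod.swap p) <;>
      simp [hs _ _]
  rw [htot.symm] at *
  rw [hnot, Finset.sum_union hdisj, hdiag, add_zero, hswap] at hsplit
  linarith [hsplit]

lemma double_sum_expand {n : ℕ} (a b : Fin n → ℝ) :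
    ∑ i, ∑ j, (a i - a j) * (b i - b j)
      = 2 * ((n : ℝ) * ∑ k, a k * b k - (∑ k, a k) * (∑ k, b k)) := by
  have hpt : ∀ i j : Fin n, (a i - a j) * (b i - b j)
      = a i * b i - a i * b j - a j * b i + a j * b j := fun i j => by ring
  have hrow : ∀ i : Fin n, ∑ j, (a i - a j) * (b i - b j)
      = (n : ℝ) * (a i * b i) - a i * (∑ k, b k) - (∑ k, a k) * b i + ∑ k, a k * b k := by
    intro i
    simp_rw [hpt, Finset.sum_add_distrib, Finset.sum_sub_distrib, Finset.sum_const,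
      Finset.card_univ, Fintype.card_fin, nsmul_eq_mul, ← Finset.mul_sum, ← Finset.sum_mul]
  simp_rw [hrow, Finset.sum_add_distrib, Finset.sum_sub_distrib, Finset.sum_const,
    Finset.card_univ, Fintype.card_fin, nsmul_eq_mul, ← Finset.mul_sum, ← Finset.sum_mul]
  ring

lemma count_pairs {n : ℕ} :
    2 * ∑ p ∈ Finset.univ.filter (fun p : Fin n × Fin n => p.1 < p.2), (1 : ℝ)
      = (n : ℝ) * ((n : ℝ) - 1) := by
  have hcp := pair_sum (fun i j : Fin n => if i = j then 0 else (1:ℝ))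
    (fun i => by simp) (fun i j => by by_cases hij : i = j <;> simp [hij, Ne.symm, eq_comm])
  have h1 : ∑ p ∈ Finset.univ.filter (fun p : Fin n × Fin n => p.1 < p.2),
      (if p.1 = p.2 then (0:ℝ) else 1)
      = ∑ p ∈ Finset.univ.filter (fun p : Fin n × Fin n => p.1 < p.2), (1:ℝ) := by
    apply Finset.sum_congr rfl
    intro p hp
    simp only [Finset.mem_filter] at hp
    simp [ne_of_lt hp.2]
  have h2 : ∀ i : Fin n, ∑ j, (if i = j then (0:ℝ) else 1) = (n : ℝ) - 1 := by
    intro i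
    have hpt : ∀ j : Fin n, (if i = j then (0:ℝ) else 1) = 1 - (if i = j then 1 else 0) := by
      intro j; by_cases hij : i = j <;> simp [hij]
    simp_rw [hpt, Finset.sum_sub_distrib, Finset.sum_const, Finset.card_univ,
      Fintype.card_fin, nsmul_eq_mul, mul_one, Finset.sum_ite_eq Finset.univ,
      Finset.mem_univ, if_true]
  rw [h1] at hcp
  rw [hcp]
  simp_rw [h2, Finset.sum_const, Finset.card_univ, Fintype.card_fin, nsmul_eq_mul]

lemma rcd_pair_expand {n : ℕ} (h : ℝ) (Q : Fin n → Fin n → Matrix (Fin n) (Fin n) ℝ)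
    (hQ : ∀ i j, Q i j = fun k l =>
      if (k = i ∧ l = i) ∨ (k = j ∧ l = j) then (1:ℝ)/2
      else if (k = i ∧ l = j) ∨ (k = j ∧ l = i) then -(1/2) else 0)
    (v x xstar : Fin n → ℝ) (i j : Fin n) (hij : i ≠ j) :
    ∑ k, (x k - h * (Q i j).mulVec v k - xstar k) ^ 2
      = (∑ k, (x k - xstar k) ^ 2)
        - h * (v i - v j) * ((x i - xstar i) - (x j - xstar j))
        + h ^ 2 * (v i - v j) ^ 2 / 2 := by
  have hentry : ∀ k l, (Q i j) k l * v l
      = (if l = i then (if k = i then (1:ℝ)/2 else if k = j then -(1/2) else 0) * v i else 0)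
        + (if l = j then (if k = j then (1:ℝ)/2 else if k = i then -(1/2) else 0) * v j else 0) := by
    intro k l
    rw [hQ]
    by_cases hli : l = i <;> by_cases hlj : l = j <;>
      by_cases hki : k = i <;> by_cases hkj : k = j <;>
      simp_all <;> ring
  have hw : ∀ k, (Q i j).mulVec v k
      = (if k = i then (1:ℝ)/2 else if k = j then -(1/2) else 0) * v i
        + (if k = j then (1:ℝ)/2 else if k = i then -(1/2) else 0) * v j := by
    intro k
    have hmv : (Q i j).mulVec v k = ∑ l, (Q i j) k l * v l := by
      simp [Matrix.mulVec, dotProduct]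
    rw [hmv]
    simp_rw [hentry, Finset.sum_add_distrib, Finset.sum_ite_eq' Finset.univ,
      Finset.mem_univ, if_true]
  have hpt2 : ∀ k, (x k - h * (Q i j).mulVec v k - xstar k) ^ 2
      = (x k - xstar k) ^ 2
        + (if k = i then h^2*(v i - v j)^2/4 - h*(v i - v j)*(x i - xstar i)
           else if k = j then h^2*(v i - v j)^2/4 + h*(v i - v j)*(x j - xstar j)
           else 0) := by
    intro k
    rw [hw k]
    by_cases h1 : k = i
    · subst h1
      simp only [eq_self_iff_true, if_true, if_neg hij]
      ring
    · by_cases h2 : k = j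
      · subst h2
        simp only [eq_self_iff_true, if_true, if_neg h1]
        ring
      · simp only [if_neg h1, if_neg h2]
        ring
  simp_rw [hpt2, Finset.sum_add_distrib]
  rw [sum_ite_pair i j hij]
  ring

lemma sum_T {n : ℕ} (D s : Fin n → ℝ) (h : ℝ) (hsum_s : ∑ k, s k = 0) :
    2 * ∑ p ∈ Finset.univ.filter (fun p : Fin n × Fin n => p.1 < p.2),
        ((∑ k, s k ^ 2) - h * (D p.1 - D p.2) * (s p.1 - s p.2)
          + h ^ 2 * (D p.1 - D p.2) ^ 2 / 2)
      = (∑ k, s k ^ 2) * ((n:ℝ) * ((n:ℝ) - 1)) - 2 * h * (n:ℝ) * (∑ k, D k * s k)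
        + h ^ 2 * ((n:ℝ) * (∑ k, D k * D k) - (∑ k, D k) * (∑ k, D k)) := by
  have hpt : ∀ p : Fin n × Fin n, (∑ k, s k ^ 2) - h * (D p.1 - D p.2) * (s p.1 - s p.2)
      + h ^ 2 * (D p.1 - D p.2) ^ 2 / 2
      = (∑ k, s k ^ 2) * 1 - h * ((D p.1 - D p.2) * (s p.1 - s p.2))
        + h ^ 2 / 2 * ((D p.1 - D p.2) * (D p.1 - D p.2)) := fun p => by ring
  rw [Finset.sum_congr rfl (fun p _ => hpt p), Finset.sum_add_distrib,
    Finset.sum_sub_distrib, ← Finset.mul_sum, ← Finset.mul_sum, ← Finset.mul_sum]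
  have e2 := count_pairs (n := n)
  have e3 := pair_sum (fun i j : Fin n => (D i - D j) * (s i - s j))
    (fun i => by ring) (fun i j => by ring)
  have e4 := pair_sum (fun i j : Fin n => (D i - D j) * (D i - D j))
    (fun i => by ring) (fun i j => by ring)
  rw [double_sum_expand D s] at e3
  rw [double_sum_expand D D] at e4
  rw [hsum_s] at e3
  linear_combination (∑ k, s k ^ 2) * e2 - h * e3 + h ^ 2 / 2 * e4

lemma final_algebra (N C1 C2 C3 A T α β h : ℝ) (hN : 2 ≤ N) (hh : 0 < h)
    (hα : 0 < α) (hαβ : α ≤ β) (hhβ' : h * β ≤ 1) (hC1 : 0 ≤ C1)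
    (hC2ge : α * C1 ≤ C2) (hC3le : C3 ≤ β * C2)
    (h2T : 2 * T = C1 * (N * (N - 1)) - 2 * h * N * C2 + h ^ 2 * (N * C3 - A * A)) :
    2 / (N * (N - 1)) * T ≤ (1 - h * α / (N - 1)) * C1 := by
  have hβ : 0 < β := lt_of_lt_of_le hα hαβ
  have hNpos : 0 < N * (N - 1) := by nlinarith
  have hC2nn : 0 ≤ C2 := le_trans (mul_nonneg hα.le hC1) hC2ge
  rw [div_mul_eq_mul_div, div_le_iff₀ hNpos]
  have hkey : (1 - h * α / (N - 1)) * C1 * (N * (N - 1))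
      = C1 * (N * (N - 1)) - h * α * N * C1 := by
    have hne : N - 1 ≠ 0 := by linarith
    field_simp
  rw [hkey]
  have hNnn : (0:ℝ) ≤ N := by linarith
  have t1 : h ^ 2 * N * C3 ≤ h ^ 2 * N * (β * C2) :=
    mul_le_mul_of_nonneg_left hC3le (by positivity)
  have t2 : h ^ 2 * N * (β * C2) ≤ h * N * C2 := by
    nlinarith [mul_nonneg (mul_nonneg hh.le hNnn) hC2nn]
  have t3 : h * α * N * C1 ≤ h * N * C2 := by
    nlinarith [mul_nonneg hh.le hNnn]
  nlinarith [mul_nonneg (sq_nonneg h) (mul_self_nonneg A), h2T, t1, t2, t3]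

/-- Expected contraction of the RCD step on a complete graph: for any feasible `x`,
averaging `‖x⁺ − x*‖²` over a uniformly chosen edge yields a contraction with rate
`1 − hα/(n−1)` for any step size `0 < h ≤ 1/β`. -/
theorem rcd_expected_contraction (n : ℕ) (hn : 2 ≤ n) (α β h b : ℝ)
    (hα : 0 < α) (hαβ : α ≤ β) (hh : 0 < h) (hhβ : h ≤ 1 / β)
    (g : Fin n → ℝ → ℝ)
    (hdiff : ∀ i x, DifferentiableAt ℝ (g i) x)
    (hconv : ∀ i, ConvexOn ℝ Set.univ (fun x => g i x - α / 2 * x ^ 2))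
    (hsmooth : ∀ i x y, |deriv (g i) x - deriv (g i) y| ≤ β * |x - y|)
    (Q : Fin n → Fin n → Matrix (Fin n) (Fin n) ℝ)
    (hQ : ∀ i j, Q i j = fun k l =>
      if (k = i ∧ l = i) ∨ (k = j ∧ l = j) then (1:ℝ)/2
      else if (k = i ∧ l = j) ∨ (k = j ∧ l = i) then -(1/2) else 0)
    (xstar : Fin n → ℝ)
    (hfeas : ∑ i, xstar i = b)
    (hmin : ∀ y : Fin n → ℝ, ∑ i, y i = b →
      ∑ i, g i (xstar i) ≤ ∑ i, g i (y i))
    (x : Fin n → ℝ) (hx : ∑ i, x i = b) :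
    2 / (n * (n - 1) : ℝ) *
      ∑ p ∈ Finset.univ.filter (fun p : Fin n × Fin n => p.1 < p.2),
        ∑ k, (x k - h * (Q p.1 p.2).mulVec (fun i => deriv (g i) (x i)) k - xstar k) ^ 2
      ≤ (1 - h * α / (n - 1)) * ∑ k, (x k - xstar k) ^ 2 := by
  have hβ : (0:ℝ) < β := lt_of_lt_of_le hα hαβ
  have hhβ' : h * β ≤ 1 := by
    rw [le_div_iff₀ hβ] at hhβ; linarith
  set v : Fin n → ℝ := fun k => deriv (g k) (x k) with hv
  set D : Fin n → ℝ := fun k => deriv (g k) (x k) - deriv (g k) (xstar k) with hD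
  set s : Fin n → ℝ := fun k => x k - xstar k with hs
  -- sum of s is zero
  have hsum_s : ∑ k, s k = 0 := by
    simp only [hs, Finset.sum_sub_distrib, hx, hfeas, sub_self]
  -- optimality: all derivatives at xstar are equal
  have hlam : ∀ i j : Fin n, deriv (g i) (xstar i) = deriv (g j) (xstar j) := by
    intro i j
    by_cases hij : i = j
    · rw [hij]
    set c : Fin n → ℝ := fun k => if k = i then 1 else if k = j then -1 else 0 with hc
    set φ : ℝ → ℝ := fun t => ∑ k, g k (xstar k + t * c k) with hφ
    have hφ0 : φ 0 = ∑ k, g k (xstar k) := by simp [hφ]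
    have hloc : IsLocalMin φ 0 := by
      apply Filter.Eventually.of_forall
      intro t
      rw [hφ0]
      apply hmin
      have hsy : ∑ k, (xstar k + t * c k) = (∑ k, xstar k) + t * ∑ k, c k := by
        rw [Finset.sum_add_distrib, Finset.mul_sum]
      rw [hsy, hfeas, hc, sum_ite_pair i j hij]
      ring
    have hder : HasDerivAt φ (∑ k, deriv (g k) (xstar k) * c k) 0 := by
      apply HasDerivAt.fun_sum
      intro k _
      have h1 : HasDerivAt (fun t : ℝ => xstar k + t * c k) (c k) 0 := by
        simpa using ((hasDerivAt_id (0:ℝ)).mul_const (c k)).const_add (xstar k)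
      have h2 := (hdiff k (xstar k + 0 * c k)).hasDerivAt
      have h3 := h2.comp 0 h1
      rw [zero_mul, add_zero] at h3
      exact h3
    have hzero := hloc.hasDerivAt_eq_zero hder
    have hsum : ∑ k, deriv (g k) (xstar k) * c k
        = deriv (g i) (xstar i) + -(deriv (g j) (xstar j)) := by
      have hpt : ∀ k, deriv (g k) (xstar k) * c k
          = (if k = i then deriv (g i) (xstar i)
             else if k = j then -(deriv (g j) (xstar j)) else 0) := by
        intro k
        by_cases h1 : k = i
        · subst h1; simp [hc, hij]
        · by_cases h2 : k = j
          · subst h2; simp [hc, h1]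
          · simp [hc, h1, h2]
      simp_rw [hpt]
      exact sum_ite_pair i j hij _ _
    rw [hsum] at hzero
    linarith
  -- strong convexity: D k * s k ≥ α * s k ^ 2
  have hsc : ∀ k, α * s k ^ 2 ≤ D k * s k := by
    intro k
    set φ : ℝ → ℝ := fun y => g k y - α / 2 * y ^ 2 with hφ
    have hdφ : ∀ y, DifferentiableAt ℝ φ y := fun y =>
      (hdiff k y).sub ((differentiableAt_pow 2).const_mul (α/2))
    have hderφ : ∀ y, deriv φ y = deriv (g k) y - α * y := by
      intro y
      rw [hφ]
      have hd2 : DifferentiableAt ℝ (fun y : ℝ => α / 2 * y ^ 2) y :=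
        (differentiableAt_pow 2).const_mul (α/2)
      rw [deriv_fun_sub (hdiff k y) hd2]
      have hd3 : deriv (fun y : ℝ => α / 2 * y ^ 2) y = α * y := by
        rw [deriv_const_mul _ (differentiableAt_pow 2)]
        simp [deriv_pow]
        ring
      rw [hd3]
    have hmono := (hconv k).monotoneOn_deriv (fun y _ => hdφ y)
    rcases le_total (xstar k) (x k) with hca | hca
    · have hm := hmono (Set.mem_univ (xstar k)) (Set.mem_univ (x k)) hca
      rw [hderφ, hderφ] at hm
      simp only [hD, hs]
      nlinarith
    · have hm := hmono (Set.mem_univ (x k)) (Set.mem_univ (xstar k)) hca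
      rw [hderφ, hderφ] at hm
      simp only [hD, hs]
      nlinarith
  -- cocoercivity: D k ^ 2 ≤ β * (D k * s k)
  have hco : ∀ k, D k ^ 2 ≤ β * (D k * s k) := by
    intro k
    have h0 : 0 ≤ D k * s k := le_trans (mul_nonneg hα.le (sq_nonneg _)) (hsc k)
    have habs : |D k| ≤ β * |s k| := hsmooth k (x k) (xstar k)
    calc D k ^ 2 = |D k| * |D k| := by rw [← abs_mul, abs_mul_self]; ring
      _ ≤ |D k| * (β * |s k|) := mul_le_mul_of_nonneg_left habs (abs_nonneg _)
      _ = β * |D k * s k| := by rw [abs_mul]; ring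
      _ = β * (D k * s k) := by rw [abs_of_nonneg h0]
  -- per-pair expansion, with v i - v j = D i - D j
  have hpair : ∀ i j : Fin n, i ≠ j →
      ∑ k, (x k - h * (Q i j).mulVec v k - xstar k) ^ 2
        = (∑ k, s k ^ 2) - h * (D i - D j) * (s i - s j)
          + h ^ 2 * (D i - D j) ^ 2 / 2 := by
    intro i j hij
    have hE : v i - v j = D i - D j := by
      simp only [hv, hD]
      rw [hlam i j]
      ring
    have he := rcd_pair_expand h Q hQ v x xstar i j hij
    rw [he, hE]
  -- rewrite the big sum
  have hsum_eq : ∑ p ∈ Finset.univ.filter (fun p : Fin n × Fin n => p.1 < p.2),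
        ∑ k, (x k - h * (Q p.1 p.2).mulVec v k - xstar k) ^ 2
      = ∑ p ∈ Finset.univ.filter (fun p : Fin n × Fin n => p.1 < p.2),
        ((∑ k, s k ^ 2) - h * (D p.1 - D p.2) * (s p.1 - s p.2)
          + h ^ 2 * (D p.1 - D p.2) ^ 2 / 2) := by
    apply Finset.sum_congr rfl
    intro p hp
    simp only [Finset.mem_filter] at hp
    exact hpair p.1 p.2 (ne_of_lt hp.2)
  -- per-coordinate sums
  have hC2ge : α * (∑ k, s k ^ 2) ≤ ∑ k, D k * s k := by
    rw [Finset.mul_sum]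
    exact Finset.sum_le_sum (fun k _ => hsc k)
  have hC3le : (∑ k, D k * D k) ≤ β * ∑ k, D k * s k := by
    rw [Finset.mul_sum]
    apply Finset.sum_le_sum
    intro k _
    nlinarith [hco k]
  have hC1nn : (0:ℝ) ≤ ∑ k, s k ^ 2 := Finset.sum_nonneg (fun k _ => sq_nonneg _)
  rw [hsum_eq]
  have hraw : (∑ k, (x k - xstar k) ^ 2) = ∑ k, s k ^ 2 := rfl
  rw [hraw]
  exact final_algebra (n:ℝ) _ _ _ _ _ α β h (by exact_mod_cast hn) hh hα hαβ hhβ'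
    hC1nn hC2ge hC3le (sum_T D s h hsum_s)
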